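/- arXiv:0704.2488 — 2 statements merged into one kernel-verified Lean document; each statement's English description precedes it below -/
import Mathlib

section
/- For every integer σ ≥ 1 there exists a constant C_σ > 0 such that for all r₁, r₂ ≥ 0: Q_σ(r₁,r₂) ≥ C_σ ( r₁^{σ−1} + r₂^{σ−1} ). -/
open MeasureTheory Filter Set
open scoped ENNReal FourierTransform

noncomputable section

/-- `ℝ^n`. -/
abbrev Rn (n : ℕ) := EuclideanSpace ℝ (Fin n)

variable {n : ℕ}

/-- Partial derivative `∂_i` of a complex-valued function on `ℝ^n`. -/
def pd (i : Fin n) (f : Rn n → ℂ) : Rn n → ℂ :=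
  fun x => fderiv ℝ f x (EuclideanSpace.single i 1)

/-- Partial derivative `∂_i` of a real-valued function on `ℝ^n`. -/
def pdR (i : Fin n) (f : Rn n → ℝ) : Rn n → ℝ :=
  fun x => fderiv ℝ f x (EuclideanSpace.single i 1)

/-- Laplacian of a complex-valued function. -/
def lap (f : Rn n → ℂ) : Rn n → ℂ := fun x => ∑ i, pd i (pd i f) x

/-- Laplacian of a real-valued function. -/
def lapR (f : Rn n → ℝ) : Rn n → ℝ := fun x => ∑ i, pdR i (pdR i f) x

/-- Sobolev `H^k` norm (for smooth functions): `(Σ_{j≤k} ‖D^j f‖_{L²}²)^{1/2}`. -/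
def HkNorm (k : ℕ) (f : Rn n → ℂ) : ℝ≥0∞ :=
  (∑ j ∈ Finset.range (k+1),
    (eLpNorm (fun x => ‖iteratedFDeriv ℝ j f x‖) 2 volume)^2) ^ (1/2 : ℝ)

/-- Sobolev `H^k` norm of a real-valued function. -/
def HkNormR (k : ℕ) (f : Rn n → ℝ) : ℝ≥0∞ :=
  (∑ j ∈ Finset.range (k+1),
    (eLpNorm (fun x => ‖iteratedFDeriv ℝ j f x‖) 2 volume)^2) ^ (1/2 : ℝ)

/-- Membership in `H^k(ℝ^n)` (smooth model). -/
def InHk (k : ℕ) (f : Rn n → ℂ) : Prop := ContDiff ℝ k f ∧ HkNorm k f < ⊤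

/-- Membership in `H^∞(ℝ^n) = ∩_k H^k(ℝ^n)`. -/
def InHinf (f : Rn n → ℂ) : Prop := ∀ k, InHk k f

def InHkR (k : ℕ) (f : Rn n → ℝ) : Prop := ContDiff ℝ k f ∧ HkNormR k f < ⊤

def InHinfR (f : Rn n → ℝ) : Prop := ∀ k, InHkR k f

/-- `u ∈ C(S; H^∞(ℝ^n))` for a time set `S ⊆ ℝ`. -/
def ContHinfOn (S : Set ℝ) (u : ℝ → Rn n → ℂ) : Prop :=
  (∀ t ∈ S, InHinf (u t)) ∧
  ∀ k : ℕ, ∀ t ∈ S,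
    Tendsto (fun s => HkNorm k (fun x => u s x - u t x)) (nhdsWithin t S) (nhds 0)

def ContHinfOnR (S : Set ℝ) (φ : ℝ → Rn n → ℝ) : Prop :=
  (∀ t ∈ S, InHinfR (φ t)) ∧
  ∀ k : ℕ, ∀ t ∈ S,
    Tendsto (fun s => HkNormR k (fun x => φ s x - φ t x)) (nhdsWithin t S) (nhds 0)

/-- The Cauchy problem (NLS_ε): `iε ∂_t u + (ε²/2) Δu = |u|^{2σ} u` on the time set `S`,
with initial datum `u0`. -/
def IsNLS (σ n : ℕ) (ε : ℝ) (u0 : Rn n → ℂ) (S : Set ℝ) (u : ℝ → Rn n → ℂ) : Prop :=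
  (∀ x, u 0 x = u0 x) ∧
  ∀ t ∈ S, ∀ x,
    Complex.I * ε * derivWithin (fun s => u s x) S t + (ε^2/2) * lap (u t) x
      = ((‖u t x‖ : ℝ) : ℂ)^(2*σ) * u t x

/-- The WKB initial datum `a_0^ε e^{iφ_0/ε}`. -/
def WKBdatum (n : ℕ) (a0e : ℝ → Rn n → ℂ) (φ0 : Rn n → ℝ) (ε : ℝ) : Rn n → ℂ :=
  fun x => a0e ε x * Complex.exp (Complex.I * (φ0 x) / ε)

/-- The limit system (E):
`∂_t φ + |∇φ|²/2 + |a|^{2σ} = 0`, `∂_t a + ∇φ·∇a + aΔφ/2 = 0` on the time set `S`. -/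
def IsLimit (σ n : ℕ) (φ0 : Rn n → ℝ) (a0 : Rn n → ℂ) (S : Set ℝ)
    (φ : ℝ → Rn n → ℝ) (a : ℝ → Rn n → ℂ) : Prop :=
  (∀ x, φ 0 x = φ0 x) ∧ (∀ x, a 0 x = a0 x) ∧
  ∀ t ∈ S, ∀ x,
    (derivWithin (fun s => φ s x) S t + (1/2) * ∑ i, (pdR i (φ t) x)^2
       + (‖a t x‖)^(2*σ) = 0) ∧
    (derivWithin (fun s => a s x) S t + (∑ i, (pdR i (φ t) x : ℂ) * pd i (a t) x)
       + (1/2) * a t x * (lapR (φ t) x : ℂ) = 0)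

/-- Assumption (A). -/
def AssumpA (n : ℕ) (a0e : ℝ → Rn n → ℂ) (a0 : Rn n → ℂ) (φ0 : Rn n → ℝ) : Prop :=
  InHinf a0 ∧ InHinfR φ0 ∧ (∀ ε ∈ Ioc (0:ℝ) 1, InHinf (a0e ε)) ∧
  ∀ k : ℕ, ∃ C : ℝ, ∀ ε ∈ Ioc (0:ℝ) 1,
    HkNorm k (fun x => a0e ε x - a0 x) ≤ ENNReal.ofReal (C * ε)

/-- Assumption (A'): Assumption (A) together with a first order expansion
`a_0^ε = a_0 + ε a_1 + O(ε²)`. -/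
def AssumpA' (n : ℕ) (a0e : ℝ → Rn n → ℂ) (a0 : Rn n → ℂ) (φ0 : Rn n → ℝ)
    (a1 : Rn n → ℂ) : Prop :=
  AssumpA n a0e a0 φ0 ∧ InHinf a1 ∧
  ∀ k : ℕ, ∃ C : ℝ, ∀ ε ∈ Ioc (0:ℝ) 1,
    HkNorm k (fun x => a0e ε x - a0 x - (ε:ℂ) * a1 x) ≤ ENNReal.ofReal (C * ε^2)

/-- The admissible Sobolev indices `k` in the main theorem. -/
def goodIndex (σ n k : ℕ) : Prop :=
  σ = 1 ∨ (σ = 2 ∧ n = 1 ∧ k = 2) ∨ (σ = 2 ∧ 2 ≤ n ∧ k = 1) ∨ (3 ≤ σ ∧ k = σ)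

/-- `Q_σ(r₁,r₂) = 2σ ∫₀¹ (1-s)(r₂+s(r₁-r₂))^{σ-1} ds`. -/
def Qs (σ : ℕ) (r1 r2 : ℝ) : ℝ :=
  2 * σ * ∫ s in (0:ℝ)..1, (1 - s) * (r2 + s * (r1 - r2))^(σ - 1)

/-- `B_σ(r₁,r₂) = (r₁-r₂)√(Q_σ(r₁,r₂))`. -/
def Bs (σ : ℕ) (r1 r2 : ℝ) : ℝ := (r1 - r2) * Real.sqrt (Qs σ r1 r2)

/-- `P_σ(r₁,r₂) = Σ_{ℓ<σ} r₁^{σ-1-ℓ} r₂^ℓ`. -/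
def Ps (σ : ℕ) (r1 r2 : ℝ) : ℝ := ∑ l ∈ Finset.range σ, r1^(σ - 1 - l) * r2^l

/-- `G_σ(r₁,r₂) = P_σ(r₁,r₂)/√(Q_σ(r₁,r₂))` (with the convention `G_σ(0,0) = 0` for `σ ≥ 2`,
which holds automatically since `0/0 = 0` and `P_σ(0,0) = 0`). -/
def Gs (σ : ℕ) (r1 r2 : ℝ) : ℝ := Ps σ r1 r2 / Real.sqrt (Qs σ r1 r2)

end

/-- estimate (4.4): the convexity lower bound
`Q_σ(r₁,r₂) ≥ C_σ (r₁^{σ-1} + r₂^{σ-1})` on `[0,∞)²`. -/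
theorem Qs_lower_bound (σ : ℕ) (hσ : 1 ≤ σ) :
    ∃ C : ℝ, 0 < C ∧ ∀ r1 r2 : ℝ, 0 ≤ r1 → 0 ≤ r2 →
      C * (r1^(σ - 1) + r2^(σ - 1)) ≤ Qs σ r1 r2 := by
  obtain ⟨k, rfl⟩ : ∃ k, σ = k + 1 := ⟨σ - 1, (Nat.succ_pred_eq_of_pos hσ).symm⟩
  refine ⟨1 / (k + 2), by positivity, fun r1 r2 h1 h2 => ?_⟩
  have hks : (k + 1 : ℕ) - 1 = k := rfl
  rw [hks]
  have hcont : ∀ c d : ℝ, Continuous fun s : ℝ => (1 - s) * (c + s * d) ^ k := by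
    intro c d; fun_prop
  have hint : ∀ c d : ℝ, IntervalIntegrable (fun s : ℝ => (1 - s) * (c + s * d) ^ k)
      MeasureTheory.volume 0 1 := fun c d => (hcont c d).intervalIntegrable 0 1
  -- lower bound 1 : integrand ≥ (1-s)*(s*r1)^k
  have hI1 : (∫ s in (0:ℝ)..1, (1 - s) * (0 + s * r1) ^ k)
      ≤ ∫ s in (0:ℝ)..1, (1 - s) * (r2 + s * (r1 - r2)) ^ k := by
    apply intervalIntegral.integral_mono_on (by norm_num) (hint 0 r1) (hint r2 (r1 - r2))
    intro s hs
    simp only [Set.mem_Icc] at hs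
    have h1s : (0:ℝ) ≤ 1 - s := by linarith [hs.2]
    have hle : (0:ℝ) + s * r1 ≤ r2 + s * (r1 - r2) := by nlinarith [hs.1, hs.2]
    have h0 : (0:ℝ) ≤ 0 + s * r1 := by nlinarith [hs.1]
    exact mul_le_mul_of_nonneg_left (pow_le_pow_left₀ h0 hle k) h1s
  -- lower bound 2 : integrand ≥ (1-s)*((1-s)*r2)^k
  have hI2 : (∫ s in (0:ℝ)..1, (1 - s) * (r2 + s * (-r2)) ^ k)
      ≤ ∫ s in (0:ℝ)..1, (1 - s) * (r2 + s * (r1 - r2)) ^ k := by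
    apply intervalIntegral.integral_mono_on (by norm_num) (hint r2 (-r2)) (hint r2 (r1 - r2))
    intro s hs
    simp only [Set.mem_Icc] at hs
    have h1s : (0:ℝ) ≤ 1 - s := by linarith [hs.2]
    have hle : r2 + s * (-r2) ≤ r2 + s * (r1 - r2) := by nlinarith [hs.1]
    have h0 : (0:ℝ) ≤ r2 + s * (-r2) := by nlinarith [hs.1, hs.2]
    exact mul_le_mul_of_nonneg_left (pow_le_pow_left₀ h0 hle k) h1s
  -- compute the two lower integrals
  have hval1 : (∫ s in (0:ℝ)..1, (1 - s) * (0 + s * r1) ^ k)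
      = r1 ^ k * (1 / (k + 1) - 1 / (k + 2)) := by
    have : ∀ s : ℝ, (1 - s) * (0 + s * r1) ^ k = r1 ^ k * (s ^ k - s ^ (k + 1)) := by
      intro s; rw [zero_add, mul_pow]; ring
    rw [intervalIntegral.integral_congr (fun s _ => this s),
      intervalIntegral.integral_const_mul,
      intervalIntegral.integral_sub (intervalIntegral.intervalIntegrable_pow k)
        (intervalIntegral.intervalIntegrable_pow (k + 1)),
      integral_pow, integral_pow]
    push_cast
    ring_nf
  have hval2 : (∫ s in (0:ℝ)..1, (1 - s) * (r2 + s * (-r2)) ^ k)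
      = r2 ^ k * (1 / (k + 2)) := by
    have : ∀ s : ℝ, (1 - s) * (r2 + s * (-r2)) ^ k = r2 ^ k * (1 - s) ^ (k + 1) := by
      intro s
      have : r2 + s * (-r2) = (1 - s) * r2 := by ring
      rw [this, mul_pow, pow_succ]; ring
    rw [intervalIntegral.integral_congr (fun s _ => this s),
      intervalIntegral.integral_const_mul]
    have hsub := intervalIntegral.integral_comp_sub_left (a := (0:ℝ)) (b := 1)
      (fun x : ℝ => x ^ (k + 1)) 1
    norm_num at hsub
    rw [hsub, show ((k:ℝ) + 1 + 1) = (k:ℝ) + 2 by ring, one_div]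
  rw [hval1] at hI1
  rw [hval2] at hI2
  unfold Qs
  rw [hks]
  have hr1 : (0:ℝ) ≤ r1 ^ k := pow_nonneg h1 k
  have hr2 : (0:ℝ) ≤ r2 ^ k := pow_nonneg h2 k
  have hk1 : (0:ℝ) < (k:ℝ) + 1 := by positivity
  have hk2 : (0:ℝ) < (k:ℝ) + 2 := by positivity
  push_cast
  have key : (1 / ((k:ℝ) + 2)) * r1 ^ k ≤ ((k:ℝ) + 1) *
      (r1 ^ k * (1 / ((k:ℝ) + 1) - 1 / ((k:ℝ) + 2))) := by
    have heq : (1 / ((k:ℝ) + 1) - 1 / ((k:ℝ) + 2)) = 1 / (((k:ℝ) + 1) * ((k:ℝ) + 2)) := by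
      field_simp
      ring
    rw [heq]
    refine le_of_eq ?_
    field_simp
  have key2 : (1 / ((k:ℝ) + 2)) * r2 ^ k ≤ ((k:ℝ) + 1) * (r2 ^ k * (1 / ((k:ℝ) + 2))) := by
    have hpos : (0:ℝ) < 1 / ((k:ℝ) + 2) := by positivity
    have h := mul_nonneg (mul_nonneg (Nat.cast_nonneg (α := ℝ) k) hr2) hpos.le
    nlinarith
  calc 1 / ((k:ℝ) + 2) * (r1 ^ k + r2 ^ k)
      = 1 / ((k:ℝ) + 2) * r1 ^ k + 1 / ((k:ℝ) + 2) * r2 ^ k := by ring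
    _ ≤ ((k:ℝ) + 1) * (r1 ^ k * (1 / ((k:ℝ) + 1) - 1 / ((k:ℝ) + 2)))
        + ((k:ℝ) + 1) * (r2 ^ k * (1 / ((k:ℝ) + 2))) := add_le_add key key2
    _ ≤ ((k:ℝ) + 1) * (∫ s in (0:ℝ)..1, (1 - s) * (r2 + s * (r1 - r2)) ^ k)
        + ((k:ℝ) + 1) * (∫ s in (0:ℝ)..1, (1 - s) * (r2 + s * (r1 - r2)) ^ k) := by
        have hp : (0:ℝ) ≤ (k:ℝ) + 1 := by positivity
        exact add_le_add (mul_le_mul_of_nonneg_left hI1 hp)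
          (mul_le_mul_of_nonneg_left hI2 hp)
    _ = 2 * ((k:ℝ) + 1) * ∫ s in (0:ℝ)..1, (1 - s) * (r2 + s * (r1 - r2)) ^ k := by ring
end

section
/- Let σ ≥ 1 be an integer. For every (r₁,r₂) ∈ [0,∞)² with (r₁,r₂) ≠ (0,0), the function B_σ is continuously differentiable on an open neighborhood of (r₁,r₂) in ℝ², and its partial derivatives satisfy at (r₁,r₂): B_σ(r₁,r₂) · ∂B_σ/∂r₁ (r₁,r₂) = r₁^σ − r₂^σ, and B_σ(r₁,r₂) · ∂B_σ/∂r₂ (r₁,r₂) = σ ( r₂^σ − r₂^{σ−1} r₁ ). -/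
open MeasureTheory Filter Set
open scoped ENNReal FourierTransform

open intervalIntegral in
private theorem myint_aux (j : ℕ) :
    ∫ s in (0:ℝ)..1, (1-s)*s^j = 1/(((j:ℝ)+1)*((j:ℝ)+2)) := by
  have h : ∀ s : ℝ, (1-s)*s^j = s^j - s^(j+1) := by intro s; ring
  simp_rw [h]
  rw [intervalIntegral.integral_sub ((continuous_pow j).intervalIntegrable 0 1)
    ((continuous_pow (j+1)).intervalIntegrable 0 1), integral_pow, integral_pow]
  have h1 : ((j:ℝ)+1) ≠ 0 := by positivity
  have h2 : ((j:ℝ)+1+1) ≠ 0 := by positivity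
  simp only [one_pow, ne_eq, zero_pow, Nat.succ_ne_zero, not_false_iff]
  push_cast
  rw [div_sub_div _ _ h1 h2, div_eq_div_iff (by positivity) (by positivity)]
  ring

noncomputable def Qpoly (m : ℕ) (r1 r2 : ℝ) : ℝ :=
  2*(m+1) * ∑ k ∈ Finset.range (m+1),
    r2^k * (r1-r2)^(m-k) * (m.choose k) *
      (1/(((((m-k:ℕ)):ℝ)+1)*((((m-k:ℕ)):ℝ)+2)))

theorem Qs_eq_Qpoly (m : ℕ) (r1 r2 : ℝ) : Qs (m+1) r1 r2 = Qpoly m r1 r2 := by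
  unfold Qs Qpoly
  have hsimp : (m+1) - 1 = m := rfl
  rw [hsimp]
  have h : ∀ s : ℝ, (1-s)*(r2+s*(r1-r2))^m
      = ∑ k ∈ Finset.range (m+1),
          (r2^k * (r1-r2)^(m-k) * (m.choose k)) * ((1-s) * s^(m-k)) := by
    intro s
    rw [add_pow, Finset.mul_sum]
    refine Finset.sum_congr rfl fun k hk => ?_
    rw [mul_pow]
    ring
  simp_rw [h]
  rw [intervalIntegral.integral_finset_sum (fun k _ =>
    (Continuous.intervalIntegrable (by continuity) 0 1))]
  simp_rw [intervalIntegral.integral_const_mul, myint_aux]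
  push_cast
  ring

theorem sq_mul_Qs (m : ℕ) (r1 r2 : ℝ) :
    (r1-r2)^2 * Qs (m+1) r1 r2
      = 2*(r1^(m+2) - r2^(m+2))/((m:ℝ)+2) - 2*(r1-r2)*r2^(m+1) := by
  set d := r1 - r2 with hd
  have hm1 : ((m:ℝ)+1) ≠ 0 := by positivity
  have hm2 : ((m:ℝ)+2) ≠ 0 := by positivity
  set u : ℝ → ℝ := fun s => (1-s)*d*(r2+s*d)^(m+1)/((m:ℝ)+1)
      + (r2+s*d)^(m+2)/(((m:ℝ)+1)*((m:ℝ)+2)) with hu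
  have hu' : ∀ s ∈ Set.uIcc (0:ℝ) 1, HasDerivAt u ((1-s)*d^2*(r2+s*d)^m) s := by
    intro s _
    have hinner : HasDerivAt (fun s : ℝ => r2 + s*d) d s := by
      simpa using ((hasDerivAt_id s).mul_const d).const_add r2
    have hp1 := hinner.pow (m+1)
    have hp2 := hinner.pow (m+2)
    have hl : HasDerivAt (fun s : ℝ => (1-s)*d) (-d) s := by
      simpa using ((hasDerivAt_id s).const_sub 1).mul_const d
    have h := ((hl.mul hp1).div_const ((m:ℝ)+1)).add
      (hp2.div_const (((m:ℝ)+1)*((m:ℝ)+2)))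
    convert h using 1
    rfl
    rfl
    · funext x
      simp only [hu, Pi.add_apply, Pi.mul_apply, Pi.pow_apply]
    simp only [Pi.pow_apply, Nat.add_sub_cancel, show m+2-1 = m+1 from rfl]
    push_cast
    field_simp
    ring
  have hint : (∫ s in (0:ℝ)..1, (1-s)*d^2*(r2+s*d)^m) = u 1 - u 0 :=
    intervalIntegral.integral_eq_sub_of_hasDerivAt hu'
      (Continuous.intervalIntegrable (by continuity) 0 1)
  have hQ : Qs (m+1) r1 r2 = 2*((m:ℝ)+1) * ∫ s in (0:ℝ)..1, (1-s)*(r2+s*d)^m := by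
    unfold Qs
    norm_num
    exact Or.inl rfl
  have hpull : ∀ s : ℝ, (1-s)*d^2*(r2+s*d)^m = d^2 * ((1-s)*(r2+s*d)^m) :=
    fun s => by ring
  have h2 : d^2 * Qs (m+1) r1 r2
      = 2*((m:ℝ)+1) * ∫ s in (0:ℝ)..1, (1-s)*d^2*(r2+s*d)^m := by
    simp_rw [hpull]
    rw [intervalIntegral.integral_const_mul, hQ]
    ring
  rw [h2, hint]
  have e1 : r2 + 1*d = r1 := by rw [hd]; ring
  have e0 : r2 + 0*d = r2 := by ring
  simp only [hu, e1, e0, sub_self, one_mul, zero_mul, mul_zero, zero_div, zero_add]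
  field_simp
  ring

theorem Qs_pos (m : ℕ) (r1 r2 : ℝ) (h1 : 0 ≤ r1) (h2 : 0 ≤ r2)
    (hne : (r1, r2) ≠ (0, 0)) : 0 < Qs (m+1) r1 r2 := by
  have hor : 0 < r1 ∨ 0 < r2 := by
    rcases h1.lt_or_eq with h | h
    · exact Or.inl h
    · rcases h2.lt_or_eq with h' | h'
      · exact Or.inr h'
      · exact absurd (by rw [← h, ← h']) hne
  unfold Qs
  apply mul_pos (by positivity)
  apply intervalIntegral.intervalIntegral_pos_of_pos_on
    (Continuous.intervalIntegrable (by continuity) 0 1)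
  · intro s hs
    obtain ⟨hs0, hs1⟩ := hs
    have hbase : 0 < r2 + s * (r1 - r2) := by
      rcases hor with h | h
      · nlinarith [mul_pos hs0 h, mul_nonneg (by linarith : (0:ℝ) ≤ 1 - s) h2]
      · nlinarith [mul_nonneg hs0.le h1, mul_pos (by linarith : (0:ℝ) < 1 - s) h]
    exact mul_pos (by linarith) (pow_pos hbase _)
  · exact zero_lt_one

theorem Qpoly_contDiff (m : ℕ) : ContDiff ℝ 2 (fun q : ℝ × ℝ => Qpoly m q.1 q.2) := by
  unfold Qpoly
  apply contDiff_const.mul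
  apply ContDiff.sum
  intro k _
  exact (((contDiff_snd.pow k).mul
    ((contDiff_fst.sub contDiff_snd).pow (m-k))).mul contDiff_const).mul contDiff_const

/-- away from the origin in `[0,∞)²`, `B_σ` is `C¹` and satisfies
`B_σ ∂_{r₁}B_σ = r₁^σ - r₂^σ` and `B_σ ∂_{r₂}B_σ = σ(r₂^σ - r₂^{σ-1} r₁)`. -/
theorem Bs_derivative_identities (σ : ℕ) (hσ : 1 ≤ σ)
    (r1 r2 : ℝ) (h1 : 0 ≤ r1) (h2 : 0 ≤ r2) (hne : (r1, r2) ≠ (0, 0)) :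
    (∃ U : Set (ℝ × ℝ), IsOpen U ∧ (r1, r2) ∈ U ∧
      ContDiffOn ℝ 1 (fun q : ℝ × ℝ => Bs σ q.1 q.2) U) ∧
    Bs σ r1 r2 * deriv (fun r => Bs σ r r2) r1 = r1^σ - r2^σ ∧
    Bs σ r1 r2 * deriv (fun r => Bs σ r1 r) r2 = σ * (r2^σ - r2^(σ - 1) * r1) := by
  obtain ⟨m, rfl⟩ : ∃ m, σ = m + 1 := ⟨σ - 1, (Nat.succ_pred_eq_of_pos hσ).symm⟩
  have hQeq : ∀ a b : ℝ, Qs (m+1) a b = Qpoly m a b := Qs_eq_Qpoly m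
  have hBeq : ∀ a b : ℝ, Bs (m+1) a b = (a - b) * Real.sqrt (Qpoly m a b) := by
    intro a b; rw [Bs, hQeq]
  have hQc := Qpoly_contDiff m
  have hpos : 0 < Qpoly m r1 r2 := hQeq r1 r2 ▸ Qs_pos m r1 r2 h1 h2 hne
  refine ⟨?_, ?_, ?_⟩
  · refine ⟨{q : ℝ × ℝ | 0 < Qpoly m q.1 q.2},
      isOpen_lt continuous_const hQc.continuous, hpos, ?_⟩
    have hfe : (fun q : ℝ × ℝ => Bs (m+1) q.1 q.2)
        = fun q : ℝ × ℝ => (q.1 - q.2) * Real.sqrt (Qpoly m q.1 q.2) :=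
      funext fun q => hBeq q.1 q.2
    rw [hfe]
    intro q hq
    refine (ContDiffAt.mul ?_ ?_).contDiffWithinAt
    · exact (contDiff_fst.sub contDiff_snd).contDiffAt
    · exact (Real.contDiffAt_sqrt (ne_of_gt hq)).comp q (hQc.of_le one_le_two).contDiffAt
  · -- derivative in r1
    set Q1 : ℝ → ℝ := fun r => Qpoly m r r2 with hQ1def
    have hQ1eq : ∀ r : ℝ, Q1 r = Qs (m+1) r r2 := fun r => (hQeq r r2).symm
    have hQ1c : ContDiff ℝ 1 Q1 :=
      (hQc.of_le one_le_two).comp (contDiff_id.prodMk contDiff_const)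
    have hQ1pos : 0 < Q1 r1 := hpos
    have hQ1d : HasDerivAt Q1 (deriv Q1 r1) r1 :=
      ((hQ1c.differentiable one_ne_zero) r1).hasDerivAt
    have hsq : HasDerivAt (fun r => Real.sqrt (Q1 r))
        (1 / (2 * Real.sqrt (Q1 r1)) * deriv Q1 r1) r1 := by
      simpa [Function.comp_def] using
        (Real.hasDerivAt_sqrt (ne_of_gt hQ1pos)).comp r1 hQ1d
    set B' := 1 * Real.sqrt (Q1 r1)
        + (r1 - r2) * (1 / (2 * Real.sqrt (Q1 r1)) * deriv Q1 r1) with hB'def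
    have hB1 : HasDerivAt (fun r => (r - r2) * Real.sqrt (Q1 r)) B' r1 :=
      ((hasDerivAt_id r1).sub_const r2).mul hsq
    have hfe : (fun r => Bs (m+1) r r2) = fun r => (r - r2) * Real.sqrt (Q1 r) :=
      funext fun r => hBeq r r2
    have hderiv_eq : deriv (fun r => Bs (m+1) r r2) r1 = B' := by
      rw [hfe]; exact hB1.deriv
    have hBsq : HasDerivAt (fun r => ((r - r2) * Real.sqrt (Q1 r))^2)
        ((2:ℕ) * ((r1 - r2) * Real.sqrt (Q1 r1))^1 * B') r1 := hB1.pow 2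
    have hEq : (fun r => ((r - r2) * Real.sqrt (Q1 r))^2) =ᶠ[nhds r1]
        (fun r => 2*(r^(m+2) - r2^(m+2))/((m:ℝ)+2) - 2*(r - r2)*r2^(m+1)) := by
      have hopen : IsOpen {r : ℝ | 0 < Q1 r} :=
        isOpen_lt continuous_const hQ1c.continuous
      filter_upwards [hopen.mem_nhds hQ1pos] with r hr
      have h' : ((r - r2) * Real.sqrt (Q1 r))^2 = (r - r2)^2 * Q1 r := by
        rw [mul_pow, Real.sq_sqrt hr.le]
      rw [h', hQ1eq r, sq_mul_Qs]
    have hF : HasDerivAt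
        (fun r => 2*(r^(m+2) - r2^(m+2))/((m:ℝ)+2) - 2*(r - r2)*r2^(m+1))
        (2*r1^(m+1) - 2*r2^(m+1)) r1 := by
      have h := ((((hasDerivAt_pow (m+2) r1).sub_const (r2^(m+2))).const_mul
        (2:ℝ)).div_const ((m:ℝ)+2)).sub
        ((((hasDerivAt_id r1).sub_const r2).mul_const (r2^(m+1))).const_mul (2:ℝ))
      convert h using 1
      · rfl
      · rfl
      · funext x
        try simp only [id, id_eq, Pi.sub_apply, Pi.mul_apply]
        ring
      · have hm2 : ((m:ℝ)+2) ≠ 0 := by positivity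
        simp only [Nat.add_sub_cancel, show m+2-1 = m+1 from rfl]
        push_cast
        field_simp
    have huniq : (2:ℝ) * ((r1 - r2) * Real.sqrt (Q1 r1))^1 * B'
        = 2*r1^(m+1) - 2*r2^(m+1) := by
      have h := hBsq.unique (hF.congr_of_eventuallyEq hEq)
      push_cast at h
      exact h
    rw [hBeq, hderiv_eq]
    have hQrw : Real.sqrt (Qpoly m r1 r2) = Real.sqrt (Q1 r1) := rfl
    rw [hQrw]
    simp only [pow_one] at huniq
    linarith
  · -- derivative in r2
    set Q2 : ℝ → ℝ := fun t => Qpoly m r1 t with hQ2def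
    have hQ2eq : ∀ t : ℝ, Q2 t = Qs (m+1) r1 t := fun t => (hQeq r1 t).symm
    have hQ2c : ContDiff ℝ 1 Q2 :=
      (hQc.of_le one_le_two).comp (contDiff_const.prodMk contDiff_id)
    have hQ2pos : 0 < Q2 r2 := hpos
    have hQ2d : HasDerivAt Q2 (deriv Q2 r2) r2 :=
      ((hQ2c.differentiable one_ne_zero) r2).hasDerivAt
    have hsq : HasDerivAt (fun t => Real.sqrt (Q2 t))
        (1 / (2 * Real.sqrt (Q2 r2)) * deriv Q2 r2) r2 := by
      simpa [Function.comp_def] using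
        (Real.hasDerivAt_sqrt (ne_of_gt hQ2pos)).comp r2 hQ2d
    have hlin : HasDerivAt (fun t : ℝ => r1 - t) (-1) r2 := by
      simpa using (hasDerivAt_id r2).const_sub r1
    set B' := (-1) * Real.sqrt (Q2 r2)
        + (r1 - r2) * (1 / (2 * Real.sqrt (Q2 r2)) * deriv Q2 r2) with hB'def
    have hB2 : HasDerivAt (fun t => (r1 - t) * Real.sqrt (Q2 t)) B' r2 :=
      hlin.mul hsq
    have hfe : (fun t => Bs (m+1) r1 t) = fun t => (r1 - t) * Real.sqrt (Q2 t) :=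
      funext fun t => hBeq r1 t
    have hderiv_eq : deriv (fun t => Bs (m+1) r1 t) r2 = B' := by
      rw [hfe]; exact hB2.deriv
    have hBsq : HasDerivAt (fun t => ((r1 - t) * Real.sqrt (Q2 t))^2)
        ((2:ℕ) * ((r1 - r2) * Real.sqrt (Q2 r2))^1 * B') r2 := hB2.pow 2
    have hEq : (fun t => ((r1 - t) * Real.sqrt (Q2 t))^2) =ᶠ[nhds r2]
        (fun t => 2*(r1^(m+2) - t^(m+2))/((m:ℝ)+2) - 2*(r1 - t)*t^(m+1)) := by
      have hopen : IsOpen {t : ℝ | 0 < Q2 t} :=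
        isOpen_lt continuous_const hQ2c.continuous
      filter_upwards [hopen.mem_nhds hQ2pos] with t ht
      have h' : ((r1 - t) * Real.sqrt (Q2 t))^2 = (r1 - t)^2 * Q2 t := by
        rw [mul_pow, Real.sq_sqrt ht.le]
      rw [h', hQ2eq t, sq_mul_Qs]
    have hF : HasDerivAt
        (fun t => 2*(r1^(m+2) - t^(m+2))/((m:ℝ)+2) - 2*(r1 - t)*t^(m+1))
        (2*((m:ℝ)+1)*(r2^(m+1) - r2^m * r1)) r2 := by
      have h := ((((hasDerivAt_pow (m+2) r2).const_sub (r1^(m+2))).const_mul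
        (2:ℝ)).div_const ((m:ℝ)+2)).sub
        ((hlin.mul (hasDerivAt_pow (m+1) r2)).const_mul (2:ℝ))
      convert h using 1
      · rfl
      · rfl
      · funext x
        try simp only [id, id_eq, Pi.sub_apply, Pi.mul_apply]
        ring
      · have hm2 : ((m:ℝ)+2) ≠ 0 := by positivity
        simp only [Nat.add_sub_cancel, show m+2-1 = m+1 from rfl]
        push_cast
        field_simp
        ring
    have huniq : (2:ℝ) * ((r1 - r2) * Real.sqrt (Q2 r2))^1 * B'
        = 2*((m:ℝ)+1)*(r2^(m+1) - r2^m * r1) := by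
      have h := hBsq.unique (hF.congr_of_eventuallyEq hEq)
      push_cast at h
      exact h
    rw [hBeq, hderiv_eq]
    have hQrw : Real.sqrt (Qpoly m r1 r2) = Real.sqrt (Q2 r2) := rfl
    rw [hQrw]
    have hidx : m + 1 - 1 = m := rfl
    rw [hidx]
    simp only [pow_one] at huniq
    push_cast
    linarith
end
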